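/- For p, q ∈ ℝ³ set p₀ := √(1 + |p|²), q₀ := √(1 + |q|²) and τ(p,q) := p₀ q₀ − p·q. Then: (i) for all p, q ∈ ℝ³, 0 ≤ τ(p,q) − 1 ≤ (1/2)|p − q|², and τ(p,q) = 1 if and only if p = q; (ii) there exists a universal constant c > 0 such that τ(p,q) − 1 ≥ c |p − q|²/q₀² whenever |p − q| < (|p| + 1)/2, and τ(p,q) − 1 ≥ c · p₀/q₀ whenever |p − q| ≥ (|p| + 1)/2. -/

import Mathlib

open MeasureTheory

/-- Relativistic energy `p₀ = √(1 + |p|²)`. -/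
noncomputable def pZero (p : EuclideanSpace ℝ (Fin 3)) : ℝ := Real.sqrt (1 + ‖p‖ ^ 2)

/-- `τ(p,q) = p₀ q₀ - p·q`, the Lorentz inner product of the energy-momentum 4-vectors. -/
noncomputable def tauLor (p q : EuclideanSpace ℝ (Fin 3)) : ℝ :=
  pZero p * pZero q - (inner ℝ p q : ℝ)

lemma pZero_sq (p : EuclideanSpace ℝ (Fin 3)) : pZero p ^ 2 = 1 + ‖p‖ ^ 2 :=
  Real.sq_sqrt (by positivity)

lemma one_le_pZero (p : EuclideanSpace ℝ (Fin 3)) : 1 ≤ pZero p := by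
  have h := pZero_sq p
  have h0 : 0 ≤ pZero p := Real.sqrt_nonneg _
  nlinarith [sq_nonneg ‖p‖]

lemma pZero_pos (p : EuclideanSpace ℝ (Fin 3)) : 0 < pZero p :=
  lt_of_lt_of_le one_pos (one_le_pZero p)

lemma tau_key (p q : EuclideanSpace ℝ (Fin 3)) :
    0 ≤ tauLor p q - 1 ∧
      dist p q ^ 2 ≤ (tauLor p q - 1) * (3 * (pZero p * pZero q)) ∧
      tauLor p q - 1 ≤ 1 / 2 * dist p q ^ 2 := by
  set a := ‖p‖ with ha
  set b := ‖q‖ with hb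
  set t : ℝ := inner ℝ p q with htdef
  have ha0 : 0 ≤ a := norm_nonneg p
  have hb0 : 0 ≤ b := norm_nonneg q
  have ht : |t| ≤ a * b := abs_real_inner_le_norm p q
  have ht1 : t ≤ a * b := (abs_le.mp ht).2
  have ht2 : -(a * b) ≤ t := (abs_le.mp ht).1
  have ht3 : t ^ 2 ≤ (a * b) ^ 2 := by nlinarith
  have hd : dist p q ^ 2 = a ^ 2 - 2 * t + b ^ 2 := by
    rw [dist_eq_norm]; exact norm_sub_sq_real p q
  set P := pZero p with hPdef
  set Q := pZero q with hQdef
  have hP2 : P ^ 2 = 1 + a ^ 2 := pZero_sq p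
  have hQ2 : Q ^ 2 = 1 + b ^ 2 := pZero_sq q
  have hP0 : 0 < P := pZero_pos p
  have hQ0 : 0 < Q := pZero_pos q
  have hPQ2 : (P * Q) ^ 2 = (1 + a ^ 2) * (1 + b ^ 2) := by
    rw [mul_pow, hP2, hQ2]
  have hs : 1 + a * b ≤ P * Q := by
    nlinarith [sq_nonneg (a - b), mul_pos hP0 hQ0]
  have hT : tauLor p q - 1 = P * Q - t - 1 := by
    simp [tauLor, hPdef, hQdef, htdef]
  have hT0 : 0 ≤ tauLor p q - 1 := by rw [hT]; linarith
  refine ⟨hT0, ?_, ?_⟩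
  · have e1 : (P * Q - t - 1) * (P * Q + t + 1) = (1 + a ^ 2) * (1 + b ^ 2) - (t + 1) ^ 2 := by
      rw [show (P * Q - t - 1) * (P * Q + t + 1) = (P * Q) ^ 2 - (t + 1) ^ 2 from by ring, hPQ2]
    have e2 : dist p q ^ 2 ≤ (P * Q - t - 1) * (P * Q + t + 1) := by
      rw [e1, hd]; nlinarith
    have e3 : P * Q + t + 1 ≤ 3 * (P * Q) := by nlinarith
    have e4 : (P * Q - t - 1) * (P * Q + t + 1) ≤ (P * Q - t - 1) * (3 * (P * Q)) := by
      apply mul_le_mul_of_nonneg_left e3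
      rw [hT] at hT0; linarith
    rw [hT]; linarith
  · have h2s : 2 * (P * Q) ≤ 2 + a ^ 2 + b ^ 2 := by
      nlinarith [sq_nonneg (a ^ 2 - b ^ 2), mul_pos hP0 hQ0]
    rw [hT, hd]; linarith

/-- Pointwise bounds on `τ(p,q) - 1`:
(i) `0 ≤ τ - 1 ≤ |p - q|²/2` with equality `τ = 1` iff `p = q`;
(ii) for a universal `c > 0`, `τ - 1 ≥ c |p-q|²/q₀²` when `|p-q| < (|p|+1)/2`, and
`τ - 1 ≥ c p₀/q₀` when `|p-q| ≥ (|p|+1)/2`. -/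
theorem tauLor_bounds :
    (∀ p q : EuclideanSpace ℝ (Fin 3),
      0 ≤ tauLor p q - 1 ∧ tauLor p q - 1 ≤ (1 / 2) * dist p q ^ 2 ∧
        (tauLor p q = 1 ↔ p = q)) ∧
    ∃ c : ℝ, 0 < c ∧ ∀ p q : EuclideanSpace ℝ (Fin 3),
      (dist p q < (‖p‖ + 1) / 2 → c * dist p q ^ 2 / pZero q ^ 2 ≤ tauLor p q - 1) ∧
      ((‖p‖ + 1) / 2 ≤ dist p q → c * (pZero p / pZero q) ≤ tauLor p q - 1) := by
  constructor
  · intro p q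
    obtain ⟨h0, hkey, hup⟩ := tau_key p q
    refine ⟨h0, hup, ?_, ?_⟩
    · intro h
      have hT : tauLor p q - 1 = 0 := by linarith
      have hd2 : dist p q ^ 2 ≤ 0 := by rw [hT] at hkey; linarith
      have : dist p q = 0 := by nlinarith [dist_nonneg (x := p) (y := q)]
      exact dist_eq_zero.mp this
    · rintro rfl
      have : (inner ℝ p p : ℝ) = ‖p‖ ^ 2 := real_inner_self_eq_norm_sq p
      have hP2 : pZero p ^ 2 = 1 + ‖p‖ ^ 2 := pZero_sq p
      simp only [tauLor, this]
      nlinarith [pZero_pos p]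
  · refine ⟨1 / 12, by norm_num, fun p q => ?_⟩
    obtain ⟨hT0, hkey, -⟩ := tau_key p q
    have hP0 : 0 < pZero p := pZero_pos p
    have hQ0 : 0 < pZero q := pZero_pos q
    have hP2 : pZero p ^ 2 = 1 + ‖p‖ ^ 2 := pZero_sq p
    have hQ2 : pZero q ^ 2 = 1 + ‖q‖ ^ 2 := pZero_sq q
    have ha0 : (0:ℝ) ≤ ‖p‖ := norm_nonneg p
    have hb0 : (0:ℝ) ≤ ‖q‖ := norm_nonneg q
    constructor
    · intro hlt
      have hba : ‖p‖ - ‖q‖ ≤ dist p q := by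
        rw [dist_eq_norm]; exact norm_sub_norm_le p q
      -- ‖q‖ > (‖p‖-1)/2
      have hb : (‖p‖ - 1) / 2 ≤ ‖q‖ := by linarith
      have h16 : 1 + ‖p‖ ^ 2 ≤ 16 * (1 + ‖q‖ ^ 2) := by
        rcases le_total ‖p‖ 1 with h | h
        · nlinarith
        · nlinarith [mul_nonneg (by linarith : (0:ℝ) ≤ 2 * ‖q‖ - (‖p‖ - 1))
            (by linarith : (0:ℝ) ≤ 2 * ‖q‖ + (‖p‖ - 1))]
      have hPQ : pZero p ≤ 4 * pZero q := by
        nlinarith [mul_pos hP0 hQ0]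
      rw [div_le_iff₀ (by positivity : (0:ℝ) < pZero q ^ 2)]
      have h3 : 3 * (pZero p * pZero q) ≤ 12 * pZero q ^ 2 := by
        nlinarith [mul_nonneg (le_of_lt hQ0) (by linarith : (0:ℝ) ≤ 4 * pZero q - pZero p)]
      have h4 : (tauLor p q - 1) * (3 * (pZero p * pZero q)) ≤
          (tauLor p q - 1) * (12 * pZero q ^ 2) :=
        mul_le_mul_of_nonneg_left h3 hT0
      nlinarith
    · intro hge
      have hd0 : (0:ℝ) ≤ dist p q := dist_nonneg
      have hd2 : pZero p ^ 2 ≤ 4 * dist p q ^ 2 := by nlinarith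
      have h5 : pZero p ^ 2 ≤ (tauLor p q - 1) * (12 * (pZero p * pZero q)) := by
        nlinarith
      have hgoal : pZero p ≤ (tauLor p q - 1) * (12 * pZero q) := by
        nlinarith [mul_pos hP0 hQ0]
      rw [show (1:ℝ) / 12 * (pZero p / pZero q) = pZero p / (12 * pZero q) from by ring,
        div_le_iff₀ (by positivity : (0:ℝ) < 12 * pZero q)]
      linarith [hgoal]
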